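/- For every g ∈ SL(2,ℝ), the image gC of the unit circle C ⊂ ℝ² \ {0} intersects C. Consequently, any discrete subgroup of SL(2,ℝ) acting properly discontinuously on ℝ² \ {0} is finite, and ℝ² \ {0} admits no tessellation by a subgroup of SL(2,ℝ). -/

import Mathlib

/-- The topology on `SL(2,ℝ)`, induced from the space of matrices. -/
instance : TopologicalSpace (Matrix.SpecialLinearGroup (Fin 2) ℝ) :=
  TopologicalSpace.induced (fun g => (g : Matrix (Fin 2) (Fin 2) ℝ)) inferInstance

lemma circle_meet (g : Matrix.SpecialLinearGroup (Fin 2) ℝ) :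
    ∃ v : Fin 2 → ℝ, (v 0) ^ 2 + (v 1) ^ 2 = 1 ∧
      ((g : Matrix (Fin 2) (Fin 2) ℝ).mulVec v 0) ^ 2 +
        ((g : Matrix (Fin 2) (Fin 2) ℝ).mulVec v 1) ^ 2 = 1 := by
  set M := (g : Matrix (Fin 2) (Fin 2) ℝ) with hM
  have hdet : M 0 0 * M 1 1 - M 0 1 * M 1 0 = 1 := by
    have := g.property
    rwa [Matrix.det_fin_two] at this
  set p := M 0 0; set q := M 0 1; set r := M 1 0; set s := M 1 1
  have hmul : ∀ v : Fin 2 → ℝ, M.mulVec v 0 = p * v 0 + q * v 1 ∧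
      M.mulVec v 1 = r * v 0 + s * v 1 := by
    intro v
    constructor <;> simp [Matrix.mulVec, dotProduct, Fin.sum_univ_two, p, q, r, s]
  set A := p ^ 2 + r ^ 2 with hA
  set B := p * q + r * s with hB
  set C := q ^ 2 + s ^ 2 with hC
  by_cases h1 : A = 1
  · refine ⟨![1, 0], by norm_num, ?_⟩
    rw [(hmul _).1, (hmul _).2]
    simp only [Matrix.cons_val_zero, Matrix.cons_val_one, Matrix.head_cons]
    nlinarith [h1]
  · have hAC : A + C - 2 ≥ 0 := by nlinarith [sq_nonneg (p - s), sq_nonneg (q + r)]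
    set s0 := Real.sqrt (A + C - 2) with hs0
    have hs0sq : s0 ^ 2 = A + C - 2 := Real.sq_sqrt hAC
    set t := (-B + s0) / (A - 1) with ht
    have hA1 : A - 1 ≠ 0 := sub_ne_zero.mpr h1
    have hACB : A * C - B ^ 2 = 1 := by
      rw [hA, hB, hC]; linear_combination (p * s - q * r + 1) * hdet
    have key : (A - 1) * t ^ 2 + 2 * B * t + (C - 1) = 0 := by
      have e : (A - 1) * t = -B + s0 := by rw [ht]; field_simp
      have hk : (A - 1) * ((A - 1) * t ^ 2 + 2 * B * t + (C - 1)) = 0 := by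
        linear_combination ((A - 1) * t + (-B + s0) + 2 * B) * e + hs0sq + hACB
      exact (mul_eq_zero.mp hk).resolve_left hA1
    have hu2 : t ^ 2 + 1 > 0 := by positivity
    set u := Real.sqrt (t ^ 2 + 1) with hu
    have husq : u ^ 2 = t ^ 2 + 1 := Real.sq_sqrt (le_of_lt hu2)
    have hune : u ≠ 0 := by positivity
    refine ⟨![t / u, 1 / u], ?_, ?_⟩
    · simp only [Matrix.cons_val_zero, Matrix.cons_val_one, Matrix.head_cons]
      field_simp
      linarith [husq]
    · rw [(hmul _).1, (hmul _).2]
      simp only [Matrix.cons_val_zero, Matrix.cons_val_one, Matrix.head_cons]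
      rw [hA, hB, hC] at key
      field_simp
      linear_combination key - husq

lemma circle_compact : IsCompact {v : Fin 2 → ℝ | v 0 ^ 2 + v 1 ^ 2 = 1} := by
  rw [Metric.isCompact_iff_isClosed_bounded]
  constructor
  · have : {v : Fin 2 → ℝ | v 0 ^ 2 + v 1 ^ 2 = 1} =
        (fun v : Fin 2 → ℝ => v 0 ^ 2 + v 1 ^ 2) ⁻¹' {1} := rfl
    rw [this]
    exact isClosed_singleton.preimage (by continuity)
  · rw [isBounded_iff_forall_norm_le]
    refine ⟨1, fun x hx => ?_⟩
    rw [pi_norm_le_iff_of_nonneg zero_le_one]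
    intro i
    have h : x 0 ^ 2 + x 1 ^ 2 = 1 := hx
    have h0 : |x 0| ≤ 1 := abs_le.mpr ⟨by nlinarith, by nlinarith⟩
    have h1 : |x 1| ≤ 1 := abs_le.mpr ⟨by nlinarith, by nlinarith⟩
    fin_cases i
    · simpa using h0
    · simpa using h1

lemma mulvec_cont (M : Matrix (Fin 2) (Fin 2) ℝ) :
    Continuous fun v : Fin 2 → ℝ => M.mulVec v :=
  LinearMap.continuous_of_finiteDimensional (Matrix.mulVecLin M)

lemma gamma_finite (Γ : Subgroup (Matrix.SpecialLinearGroup (Fin 2) ℝ))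
    (hpd : ∀ C : Set (Fin 2 → ℝ), IsCompact C → C ⊆ {v | v ≠ 0} →
      {γ : Matrix.SpecialLinearGroup (Fin 2) ℝ | γ ∈ Γ ∧
        ∃ v ∈ C, (γ : Matrix (Fin 2) (Fin 2) ℝ).mulVec v ∈ C}.Finite) :
    (Γ : Set (Matrix.SpecialLinearGroup (Fin 2) ℝ)).Finite := by
  have hsub : {v : Fin 2 → ℝ | v 0 ^ 2 + v 1 ^ 2 = 1} ⊆ {v | v ≠ 0} := by
    intro v hv hv0
    rw [hv0] at hv
    norm_num at hv
  have hfin := hpd _ circle_compact hsub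
  refine hfin.subset fun γ hγ => ?_
  obtain ⟨v, hv1, hv2⟩ := circle_meet γ
  exact ⟨hγ, v, hv1, hv2⟩

/-- For every `g ∈ SL(2,ℝ)`, the image `g C` of the unit circle
`C ⊆ ℝ² \ {0}` intersects `C`.  Consequently, any discrete subgroup of `SL(2,ℝ)` acting
properly discontinuously on `ℝ² \ {0}` is finite, and `ℝ² \ {0}` admits no tessellation
(no discrete subgroup acting properly discontinuously with compact quotient). -/
theorem stmt9 :
    (∀ g : Matrix.SpecialLinearGroup (Fin 2) ℝ,
      ∃ v : Fin 2 → ℝ, (v 0) ^ 2 + (v 1) ^ 2 = 1 ∧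
        ((g : Matrix (Fin 2) (Fin 2) ℝ).mulVec v 0) ^ 2 +
          ((g : Matrix (Fin 2) (Fin 2) ℝ).mulVec v 1) ^ 2 = 1) ∧
    (∀ Γ : Subgroup (Matrix.SpecialLinearGroup (Fin 2) ℝ), DiscreteTopology Γ →
      (∀ C : Set (Fin 2 → ℝ), IsCompact C → C ⊆ {v | v ≠ 0} →
        {γ : Matrix.SpecialLinearGroup (Fin 2) ℝ | γ ∈ Γ ∧
          ∃ v ∈ C, (γ : Matrix (Fin 2) (Fin 2) ℝ).mulVec v ∈ C}.Finite) →
      (Γ : Set (Matrix.SpecialLinearGroup (Fin 2) ℝ)).Finite) ∧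
    ¬ ∃ Γ : Subgroup (Matrix.SpecialLinearGroup (Fin 2) ℝ), DiscreteTopology Γ ∧
      (∀ C : Set (Fin 2 → ℝ), IsCompact C → C ⊆ {v | v ≠ 0} →
        {γ : Matrix.SpecialLinearGroup (Fin 2) ℝ | γ ∈ Γ ∧
          ∃ v ∈ C, (γ : Matrix (Fin 2) (Fin 2) ℝ).mulVec v ∈ C}.Finite) ∧
      (∃ K : Set (Fin 2 → ℝ), IsCompact K ∧ K ⊆ {v | v ≠ 0} ∧
        ∀ v : Fin 2 → ℝ, v ≠ 0 →
          ∃ γ ∈ Γ, ∃ k ∈ K, (γ : Matrix (Fin 2) (Fin 2) ℝ).mulVec k = v) := by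
  refine ⟨circle_meet, fun Γ _ hpd => gamma_finite Γ hpd, ?_⟩
  rintro ⟨Γ, hdisc, hpd, K, hKc, hKne, hcov⟩
  have hfin := gamma_finite Γ hpd
  set S : Set (Fin 2 → ℝ) :=
    ⋃ γ ∈ (Γ : Set (Matrix.SpecialLinearGroup (Fin 2) ℝ)),
      (fun v => (γ : Matrix (Fin 2) (Fin 2) ℝ).mulVec v) '' K with hS
  have hScomp : IsCompact S :=
    hfin.isCompact_biUnion fun γ _ => hKc.image (mulvec_cont _)
  obtain ⟨r, hr⟩ := isBounded_iff_forall_norm_le.mp hScomp.isBounded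
  set v : Fin 2 → ℝ := fun i => if i = 0 then |r| + 1 else 0 with hv
  have hvne : v ≠ 0 := by
    intro h
    have h0 : v 0 = 0 := congrFun h 0
    simp only [hv, if_pos rfl] at h0
    linarith [abs_nonneg r]
  obtain ⟨γ, hγ, k, hk, hγk⟩ := hcov v hvne
  have hvS : v ∈ S := by
    rw [hS]
    exact Set.mem_biUnion hγ ⟨k, hk, hγk⟩
  have h1 : ‖v‖ ≤ r := hr v hvS
  have h2 : ‖v 0‖ ≤ ‖v‖ := norm_le_pi_norm v 0
  have h3 : ‖v 0‖ = |r| + 1 := by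
    simp [hv, abs_of_nonneg (by positivity : (0:ℝ) ≤ |r| + 1)]
  have : |r| + 1 ≤ r := by rw [← h3]; exact le_trans h2 h1
  linarith [abs_nonneg r, le_abs_self r]
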